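/- In the commutative differential graded algebra (Λ(x,y,u,v,t), d) with |x| = |y| = 2, |u| = |v| = |t| = 3, d(x) = d(y) = 0, d(u) = x², d(v) = y², d(t) = xy, the cohomology in degree 5 is spanned by the classes [tx − uy] and [ty − vx], and these classes are nonzero. -/
import Mathlib


/-! In the Sullivan model `(Λ(x,y,u,v,t), d)` of the sphere tangent bundle of
`S² × S²`, with `|x| = |y| = 2`, `|u| = |v| = |t| = 3`, `du = x²`, `dv = y²`,
`dt = xy`, the degree 4, 5 and 6 parts have bases
`{x², xy, y²}`, `{xu, xv, xt, yu, yv, yt}` and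
`{x³, x²y, xy², y³, uv, ut, vt}` respectively.  We express the differentials
`d⁴ : Λ⁴ → Λ⁵ = 0` and `d⁵ : Λ⁵ → Λ⁶`
(`xu ↦ x³`, `xv ↦ xy²`, `xt ↦ x²y`, `yu ↦ x²y`, `yv ↦ y³`, `yt ↦ xy²`)
in these bases. -/

/-- `d⁵ : Λ⁵ → Λ⁶` in the bases `(xu, xv, xt, yu, yv, yt)` and
`(x³, x²y, xy², y³, uv, ut, vt)`. -/
noncomputable def d5 : (Fin 6 → ℚ) →ₗ[ℚ] (Fin 7 → ℚ) :=
  Matrix.toLin' !![1, 0, 0, 0, 0, 0;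
                   0, 0, 1, 1, 0, 0;
                   0, 1, 0, 0, 0, 1;
                   0, 0, 0, 0, 1, 0;
                   0, 0, 0, 0, 0, 0;
                   0, 0, 0, 0, 0, 0;
                   0, 0, 0, 0, 0, 0]

/-- `d⁴ : Λ⁴ → Λ⁵` is zero since `x², xy, y²` are cocycles. -/
noncomputable def d4 : (Fin 3 → ℚ) →ₗ[ℚ] (Fin 6 → ℚ) := 0

/-- The cocycle `tx − uy = xt − yu`. -/
noncomputable def txuy : Fin 6 → ℚ := Pi.single 2 1 - Pi.single 3 1

/-- The cocycle `ty − vx = yt − xv`. -/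
noncomputable def tyvx : Fin 6 → ℚ := Pi.single 5 1 - Pi.single 1 1

lemma d5_apply (v : Fin 6 → ℚ) (i : Fin 7) :
    d5 v i = ![v 0, v 2 + v 3, v 1 + v 5, v 4, 0, 0, 0] i := by
  simp only [d5, Matrix.toLin'_apply, Matrix.mulVec, dotProduct,
    Fin.sum_univ_six]
  fin_cases i <;> simp [show (6:Fin 7) = Fin.succ 5 from rfl, show (5:Fin 7) = Fin.succ 4 from rfl, show (5:Fin 6) = Fin.succ 4 from rfl, Matrix.cons_val_succ, Matrix.vecHead, Matrix.vecTail, Pi.single_apply, Fin.ext_iff]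

/-- The degree-5 cohomology of `(Λ(x,y,u,v,t), d)` is spanned by the classes
of `tx − uy` and `ty − vx`, and these classes are nonzero: the kernel of `d⁵`
is spanned by `tx − uy` and `ty − vx`, and neither lies in the image of `d⁴`. -/
theorem degree_five_cohomology :
    Submodule.span ℚ {txuy, tyvx} = LinearMap.ker d5 ∧
      txuy ∉ LinearMap.range d4 ∧ tyvx ∉ LinearMap.range d4 := by
  have htx : txuy ≠ 0 := by
    intro h
    have := congrFun h 2
    simp [txuy] at this
  have hty : tyvx ≠ 0 := by
    intro h
    have := congrFun h 5
    simp [tyvx] at this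
  refine ⟨?_, ?_, ?_⟩
  · apply le_antisymm
    · rw [Submodule.span_le]
      rintro w (rfl | rfl) <;>
      · simp only [SetLike.mem_coe, LinearMap.mem_ker]
        funext i
        rw [d5_apply]
        fin_cases i <;> simp [txuy, tyvx, show (6:Fin 7) = Fin.succ 5 from rfl, show (5:Fin 7) = Fin.succ 4 from rfl, show (5:Fin 6) = Fin.succ 4 from rfl, Matrix.cons_val_succ, Matrix.vecHead, Matrix.vecTail, Pi.single_apply, Fin.ext_iff, show ((0:Fin 6):Nat) = 0 from rfl, show ((1:Fin 6):Nat) = 1 from rfl, show ((2:Fin 6):Nat) = 2 from rfl, show ((3:Fin 6):Nat) = 3 from rfl, show ((4:Fin 6):Nat) = 4 from rfl, show ((5:Fin 6):Nat) = 5 from rfl, show ((0:Fin 5):Nat) = 0 from rfl, show ((1:Fin 5):Nat) = 1 from rfl, show ((2:Fin 5):Nat) = 2 from rfl, show ((3:Fin 5):Nat) = 3 from rfl, show ((4:Fin 5):Nat) = 4 from rfl, show ((0:Fin 7):Nat) = 0 from rfl, show ((1:Fin 7):Nat) = 1 from rfl, show ((2:Fin 7):Nat) = 2 from rfl, show ((3:Fin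 7):Nat) = 3 from rfl, show ((4:Fin 7):Nat) = 4 from rfl, show ((5:Fin 7):Nat) = 5 from rfl, show ((6:Fin 7):Nat) = 6 from rfl]
    · intro v hv
      rw [LinearMap.mem_ker] at hv
      have h0 := congrFun hv 0
      have h1 := congrFun hv 1
      have h2 := congrFun hv 2
      have h3 := congrFun hv 3
      rw [d5_apply] at h0 h1 h2 h3
      simp at h0 h1 h2 h3
      have : v = v 2 • txuy + v 5 • tyvx := by
        funext i
        fin_cases i <;>
          simp [txuy, tyvx] <;> linarith
      rw [this]
      exact Submodule.add_mem _
        (Submodule.smul_mem _ _ (Submodule.subset_span (Or.inl rfl)))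
        (Submodule.smul_mem _ _ (Submodule.subset_span (Or.inr rfl)))
  · simp only [d4, LinearMap.range_zero, Submodule.mem_bot]
    exact htx
  · simp only [d4, LinearMap.range_zero, Submodule.mem_bot]
    exact hty
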